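/- For every integer w ≥ 0, the number of 2-multipartitions satisfies k(2, w) ≤ 2^(w + 0.35). -/

import Mathlib

open Multiset

/-! Auxiliary development: the number of partitions satisfies
`p (n+2) ≤ p (n+1) + p n`, hence `p n ≤ fib (n+1)`. -/

/-- Decrement the two smallest entries of a (sorted) list of parts. -/
def dec2l : List ℕ → Multiset ℕ
  | a :: b :: r => (a - 1) ::ₘ (b - 1) ::ₘ (r : Multiset ℕ)
  | [a] => if a ≤ 2 then 0 else {a - 2}
  | [] => 0

lemma dec2l_sum {l : List ℕ} (h2 : ∀ x ∈ l, 2 ≤ x) (hne : l ≠ []) :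
    (dec2l l).sum + 2 = (l : Multiset ℕ).sum := by
  match l with
  | [] => exact absurd rfl hne
  | [a] =>
    have ha : 2 ≤ a := h2 a (by simp)
    by_cases h : a ≤ 2 <;> simp [dec2l, h] <;> omega
  | a :: b :: r =>
    have ha : 2 ≤ a := h2 a (by simp)
    have hb : 2 ≤ b := h2 b (by simp)
    simp [dec2l, Multiset.sum_cons]
    omega

lemma dec2l_pos {l : List ℕ} (h2 : ∀ x ∈ l, 2 ≤ x) :
    ∀ i ∈ dec2l l, 0 < i := by
  match l with
  | [] => simp [dec2l]
  | [a] =>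
    have ha : 2 ≤ a := h2 a (by simp)
    by_cases h : a ≤ 2 <;> simp [dec2l, h] <;> omega
  | a :: b :: r =>
    intro i hi
    have ha : 2 ≤ a := h2 a (by simp)
    have hb : 2 ≤ b := h2 b (by simp)
    simp [dec2l] at hi
    rcases hi with h | h | h
    · omega
    · omega
    · have := h2 i (by simp [h]); omega

lemma cons_cons_min {x y x' y' : ℕ} {s t : Multiset ℕ}
    (hxy : x ≤ y) (hys : ∀ z ∈ s, y ≤ z)
    (hxy' : x' ≤ y') (hyt : ∀ z ∈ t, y' ≤ z)
    (h : x ::ₘ y ::ₘ s = x' ::ₘ y' ::ₘ t) : x = x' ∧ y = y' ∧ s = t := by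
  have hxle : ∀ z ∈ x ::ₘ y ::ₘ s, x ≤ z := by
    intro z hz
    simp only [Multiset.mem_cons] at hz
    rcases hz with rfl | rfl | hz
    · exact le_refl _
    · exact hxy
    · exact le_trans hxy (hys _ hz)
  have hx'le : ∀ z ∈ x' ::ₘ y' ::ₘ t, x' ≤ z := by
    intro z hz
    simp only [Multiset.mem_cons] at hz
    rcases hz with rfl | rfl | hz
    · exact le_refl _
    · exact hxy'
    · exact le_trans hxy' (hyt _ hz)
  have hx'mem : x' ∈ x ::ₘ y ::ₘ s := by rw [h]; exact Multiset.mem_cons_self _ _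
  have hxmem : x ∈ x' ::ₘ y' ::ₘ t := by rw [← h]; exact Multiset.mem_cons_self _ _
  have hxx : x = x' := le_antisymm (hxle _ hx'mem) (hx'le _ hxmem)
  subst hxx
  rw [Multiset.cons_inj_right] at h
  have hyle : ∀ z ∈ y ::ₘ s, y ≤ z := by
    intro z hz
    simp only [Multiset.mem_cons] at hz
    rcases hz with rfl | hz
    · exact le_refl _
    · exact hys _ hz
  have hy'le : ∀ z ∈ y' ::ₘ t, y' ≤ z := by
    intro z hz
    simp only [Multiset.mem_cons] at hz
    rcases hz with rfl | hz
    · exact le_refl _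
    · exact hyt _ hz
  have hy'mem : y' ∈ y ::ₘ s := by rw [h]; exact Multiset.mem_cons_self _ _
  have hymem : y ∈ y' ::ₘ t := by rw [← h]; exact Multiset.mem_cons_self _ _
  have hyy : y = y' := le_antisymm (hyle _ hy'mem) (hy'le _ hymem)
  subst hyy
  rw [Multiset.cons_inj_right] at h
  exact ⟨rfl, rfl, h⟩

lemma dec2l_inj {l m : List ℕ} (hl : l.Pairwise (· ≤ ·)) (hm : m.Pairwise (· ≤ ·))
    (h2l : ∀ x ∈ l, 2 ≤ x) (h2m : ∀ x ∈ m, 2 ≤ x)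
    (hsum : (l : Multiset ℕ).sum = (m : Multiset ℕ).sum)
    (h : dec2l l = dec2l m) : (l : Multiset ℕ) = (m : Multiset ℕ) := by
  match l, m with
  | [], [] => rfl
  | [], a' :: m' =>
    exfalso
    have := h2m a' (by simp)
    simp [Multiset.sum_cons] at hsum
    omega
  | a :: l', [] =>
    exfalso
    have := h2l a (by simp)
    simp [Multiset.sum_cons] at hsum
    omega
  | [a], [a'] =>
    simp [Multiset.sum_cons] at hsum ⊢
    omega
  | [a], a' :: b' :: r' =>
    exfalso
    have hc := congrArg Multiset.card h
    by_cases hle : a ≤ 2 <;> simp [dec2l, hle] at hc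
  | a :: b :: r, [a'] =>
    exfalso
    have hc := congrArg Multiset.card h
    by_cases hle : a' ≤ 2 <;> simp [dec2l, hle] at hc
  | a :: b :: r, a' :: b' :: r' =>
    simp only [dec2l] at h
    have hab : a ≤ b := (List.pairwise_cons.mp hl).1 b (by simp)
    have hbr : ∀ z ∈ r, b ≤ z := fun z hz =>
      (List.pairwise_cons.mp (List.pairwise_cons.mp hl).2).1 z hz
    have hab' : a' ≤ b' := (List.pairwise_cons.mp hm).1 b' (by simp)
    have hbr' : ∀ z ∈ r', b' ≤ z := fun z hz =>
      (List.pairwise_cons.mp (List.pairwise_cons.mp hm).2).1 z hz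
    have ha2 : 2 ≤ a := h2l a (by simp)
    have hb2 : 2 ≤ b := h2l b (by simp)
    have ha2' : 2 ≤ a' := h2m a' (by simp)
    have hb2' : 2 ≤ b' := h2m b' (by simp)
    obtain ⟨e1, e2, e3⟩ := cons_cons_min (by omega)
      (fun z hz => by have := hbr z (by simpa using hz); omega) (by omega)
      (fun z hz => by have := hbr' z (by simpa using hz); omega) h
    have haa : a = a' := by omega
    have hbb : b = b' := by omega
    rw [haa, hbb]
    rw [Multiset.coe_eq_coe] at e3 ⊢
    exact (e3.cons _).cons _

/-- The injection witnessing `p (n+2) ≤ p (n+1) + p n`. -/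
def pstep {n : ℕ} (μ : Nat.Partition (n + 2)) :
    Nat.Partition (n + 1) ⊕ Nat.Partition n :=
  if h : (1 : ℕ) ∈ μ.parts then
    Sum.inl ⟨μ.parts.erase 1, fun hi => μ.parts_pos (Multiset.mem_of_mem_erase hi), by
      have h1 := Multiset.cons_erase h
      have h2 := μ.parts_sum
      have h3 : (1 ::ₘ μ.parts.erase 1).sum = μ.parts.sum := by rw [h1]
      rw [Multiset.sum_cons] at h3
      omega⟩
  else
    Sum.inr ⟨dec2l (μ.parts.sort (· ≤ ·)), by
      intro i hi
      refine dec2l_pos ?_ i hi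
      intro x hx
      have hx' : x ∈ μ.parts := (Multiset.mem_sort _).mp hx
      have := μ.parts_pos hx'
      have : x ≠ 1 := fun e => h (e ▸ hx')
      omega, by
      have hne : μ.parts.sort (· ≤ ·) ≠ [] := by
        intro he
        have : μ.parts = 0 := by
          have := Multiset.sort_eq μ.parts (· ≤ ·)
          rw [he] at this
          simpa using this.symm
        have hps := μ.parts_sum
        rw [this] at hps
        simp at hps
      have h2 : ∀ x ∈ μ.parts.sort (· ≤ ·), 2 ≤ x := by
        intro x hx
        have hx' : x ∈ μ.parts := (Multiset.mem_sort _).mp hx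
        have := μ.parts_pos hx'
        have : x ≠ 1 := fun e => h (e ▸ hx')
        omega
      have := dec2l_sum h2 hne
      rw [Multiset.sort_eq] at this
      have hs := μ.parts_sum
      omega⟩

lemma pstep_inj {n : ℕ} : Function.Injective (pstep (n := n)) := by
  intro μ ν h
  unfold pstep at h
  by_cases h1 : (1 : ℕ) ∈ μ.parts <;> by_cases h2 : (1 : ℕ) ∈ ν.parts
  · rw [dif_pos h1, dif_pos h2, Sum.inl.injEq] at h
    have hp : μ.parts.erase 1 = ν.parts.erase 1 := congrArg Nat.Partition.parts h
    have e1 := Multiset.cons_erase h1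
    have e2 := Multiset.cons_erase h2
    ext1
    rw [← e1, ← e2, hp]
  · rw [dif_pos h1, dif_neg h2] at h
    exact absurd h (by simp)
  · rw [dif_neg h1, dif_pos h2] at h
    exact absurd h (by simp)
  · rw [dif_neg h1, dif_neg h2, Sum.inr.injEq] at h
    have hp : dec2l (μ.parts.sort (· ≤ ·)) = dec2l (ν.parts.sort (· ≤ ·)) :=
      congrArg Nat.Partition.parts h
    have h2μ : ∀ x ∈ μ.parts.sort (· ≤ ·), 2 ≤ x := by
      intro x hx
      have hx' : x ∈ μ.parts := (Multiset.mem_sort _).mp hx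
      have := μ.parts_pos hx'
      have : x ≠ 1 := fun e => h1 (e ▸ hx')
      omega
    have h2ν : ∀ x ∈ ν.parts.sort (· ≤ ·), 2 ≤ x := by
      intro x hx
      have hx' : x ∈ ν.parts := (Multiset.mem_sort _).mp hx
      have := ν.parts_pos hx'
      have : x ≠ 1 := fun e => h2 (e ▸ hx')
      omega
    have hs : ((μ.parts.sort (· ≤ ·) : List ℕ) : Multiset ℕ).sum
        = ((ν.parts.sort (· ≤ ·) : List ℕ) : Multiset ℕ).sum := by
      rw [Multiset.sort_eq, Multiset.sort_eq, μ.parts_sum, ν.parts_sum]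
    have := dec2l_inj (Multiset.pairwise_sort _ _) (Multiset.pairwise_sort _ _) h2μ h2ν hs hp
    rw [Multiset.sort_eq, Multiset.sort_eq] at this
    ext1
    exact this

lemma partition_card_step (n : ℕ) :
    Fintype.card (Nat.Partition (n + 2)) ≤
      Fintype.card (Nat.Partition (n + 1)) + Fintype.card (Nat.Partition n) := by
  rw [← Fintype.card_sum]
  exact Fintype.card_le_of_injective _ pstep_inj

lemma partition_card_le_fib : ∀ n, Fintype.card (Nat.Partition n) ≤ Nat.fib (n + 1) := by
  have h0 : Fintype.card (Nat.Partition 0) = 1 := Fintype.card_unique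
  have h1 : Fintype.card (Nat.Partition 1) = 1 := Fintype.card_unique
  intro n
  induction n using Nat.twoStepInduction with
  | zero => simp [h0]
  | one => simp [h1]
  | more n ih1 ih2 =>
    calc Fintype.card (Nat.Partition (n + 2))
        ≤ Fintype.card (Nat.Partition (n + 1)) + Fintype.card (Nat.Partition n) :=
          partition_card_step n
      _ ≤ Nat.fib (n + 2) + Nat.fib (n + 1) := Nat.add_le_add ih2 ih1
      _ = Nat.fib (n + 3) := by
          have h : Nat.fib (n + 3) = Nat.fib (n + 1) + Nat.fib (n + 2) := Nat.fib_add_two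
          omega

/-! The convolution bound. -/

lemma sigma_rw {c : ℕ} (x : Σ n : ℕ, Nat.Partition n) (h : x.1 = c) :
    (⟨c, h ▸ x.2⟩ : Σ n : ℕ, Nat.Partition n) = x := by
  cases x
  subst h
  rfl

def gmap (w : ℕ) (f : {f : Fin 2 → Σ n : ℕ, Nat.Partition n // ∑ i, (f i).1 = w}) :
    (a : Fin (w + 1)) × (Nat.Partition (a : ℕ) × Nat.Partition (w - (a : ℕ))) :=
  ⟨⟨(f.1 0).1, by
      have := f.2
      rw [Fin.sum_univ_two] at this
      omega⟩,
    (f.1 0).2,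
    (show (f.1 1).1 = w - (f.1 0).1 by
      have := f.2
      rw [Fin.sum_univ_two] at this
      omega) ▸ (f.1 1).2⟩

lemma gmap_inj (w : ℕ) : Function.Injective (gmap w) := by
  intro f f' h
  have e0 : f.1 0 = f'.1 0 := by
    have a : f.1 0 = ⟨((gmap w f).1 : ℕ), (gmap w f).2.1⟩ := rfl
    have b : f'.1 0 = ⟨((gmap w f').1 : ℕ), (gmap w f').2.1⟩ := rfl
    rw [a, b, h]
  have e1 : f.1 1 = f'.1 1 := by
    have pf : (f.1 1).1 = w - ((gmap w f).1 : ℕ) := by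
      have := f.2
      rw [Fin.sum_univ_two] at this
      simp only [gmap]
      omega
    have pf' : (f'.1 1).1 = w - ((gmap w f').1 : ℕ) := by
      have := f'.2
      rw [Fin.sum_univ_two] at this
      simp only [gmap]
      omega
    have a : (⟨w - ((gmap w f).1 : ℕ), (gmap w f).2.2⟩ : Σ n : ℕ, Nat.Partition n) = f.1 1 :=
      sigma_rw _ pf
    have b : (⟨w - ((gmap w f').1 : ℕ), (gmap w f').2.2⟩ : Σ n : ℕ, Nat.Partition n) = f'.1 1 :=
      sigma_rw _ pf'
    rw [← a, ← b, h]
  apply Subtype.ext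
  funext i
  fin_cases i
  · exact e0
  · exact e1

/-- The number of `s`-multipartitions of `t`: tuples of `s` partitions whose sizes sum to `t`. -/
noncomputable def multipartitions (s t : ℕ) : ℕ :=
  Nat.card {f : Fin s → Σ n : ℕ, Nat.Partition n // ∑ i, (f i).1 = t}

lemma multi_le_sum (w : ℕ) :
    multipartitions 2 w ≤
      ∑ a : Fin (w + 1),
        Fintype.card (Nat.Partition (a : ℕ)) * Fintype.card (Nat.Partition (w - (a : ℕ))) := by
  rw [multipartitions]
  have := Nat.card_le_card_of_injective (gmap w) (gmap_inj w)
  rw [Nat.card_eq_fintype_card (α := (a : Fin (w + 1)) ×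
    (Nat.Partition (a : ℕ) × Nat.Partition (w - (a : ℕ))))] at this
  refine this.trans ?_
  rw [Fintype.card_sigma]
  exact le_of_eq (Finset.sum_congr rfl fun a _ => Fintype.card_prod _ _)

/-! Fibonacci arithmetic. -/

lemma fib_mul_le {a w : ℕ} (h : a ≤ w) :
    Nat.fib (a + 1) * Nat.fib (w - a + 1) ≤ Nat.fib (w + 1) := by
  have := Nat.fib_add a (w - a)
  have hw : a + (w - a) = w := by omega
  rw [hw] at this
  omega

lemma three_fib_le (w : ℕ) (hw : 2 ≤ w) : 3 * Nat.fib w ≤ 2 * Nat.fib (w + 1) := by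
  obtain ⟨k, rfl⟩ : ∃ k, w = k + 2 := ⟨w - 2, by omega⟩
  show 3 * Nat.fib (k + 2) ≤ 2 * Nat.fib (k + 3)
  have h1 : Nat.fib (k + 2) = Nat.fib k + Nat.fib (k + 1) := Nat.fib_add_two
  have h2 : Nat.fib (k + 3) = Nat.fib (k + 1) + Nat.fib (k + 2) := Nat.fib_add_two
  have h3 : Nat.fib k ≤ Nat.fib (k + 1) := Nat.fib_le_fib_succ
  omega

lemma fib_pow_bound : ∀ w, 8 ≤ w → 4 * ((w + 1) * Nat.fib (w + 1)) ≤ 5 * 2 ^ w := by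
  intro w hw
  induction w, hw using Nat.le_induction with
  | base => decide
  | succ w hw ih =>
    have key : (w + 2) * Nat.fib (w + 2) ≤ 2 * ((w + 1) * Nat.fib (w + 1)) := by
      have h1 : 3 * Nat.fib (w + 1) ≤ 2 * Nat.fib (w + 2) := three_fib_le (w + 1) (by omega)
      have h2 := Nat.fib_add_two (n := w)
      have h3 : 3 * Nat.fib w ≤ 2 * Nat.fib (w + 1) := three_fib_le w (by omega)
      have c1 : 3 * ((w + 2) * Nat.fib (w + 2)) ≤ 5 * ((w + 2) * Nat.fib (w + 1)) := by
        calc 3 * ((w + 2) * Nat.fib (w + 2)) = (w + 2) * (3 * Nat.fib (w + 1) + 3 * Nat.fib w) := by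
              rw [h2]; ring
          _ ≤ (w + 2) * (3 * Nat.fib (w + 1) + 2 * Nat.fib (w + 1)) :=
              Nat.mul_le_mul_left _ (by omega)
          _ = 5 * ((w + 2) * Nat.fib (w + 1)) := by ring
      have c2 : 5 * ((w + 2) * Nat.fib (w + 1)) ≤ 6 * ((w + 1) * Nat.fib (w + 1)) := by
        have : 5 * (w + 2) ≤ 6 * (w + 1) := by omega
        calc 5 * ((w + 2) * Nat.fib (w + 1)) = (5 * (w + 2)) * Nat.fib (w + 1) := by ring
          _ ≤ (6 * (w + 1)) * Nat.fib (w + 1) := Nat.mul_le_mul_right _ this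
          _ = 6 * ((w + 1) * Nat.fib (w + 1)) := by ring
      have c4 : 3 * ((w + 2) * Nat.fib (w + 2)) ≤ 3 * (2 * ((w + 1) * Nat.fib (w + 1))) := by
        calc 3 * ((w + 2) * Nat.fib (w + 2)) ≤ 6 * ((w + 1) * Nat.fib (w + 1)) := c1.trans c2
          _ = 3 * (2 * ((w + 1) * Nat.fib (w + 1))) := by ring
      exact Nat.le_of_mul_le_mul_left c4 (by norm_num)
    calc 4 * ((w + 1 + 1) * Nat.fib (w + 1 + 1))
        = 4 * ((w + 2) * Nat.fib (w + 2)) := rfl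
      _ ≤ 4 * (2 * ((w + 1) * Nat.fib (w + 1))) := Nat.mul_le_mul_left _ key
      _ = 2 * (4 * ((w + 1) * Nat.fib (w + 1))) := by ring
      _ ≤ 2 * (5 * 2 ^ w) := Nat.mul_le_mul_left _ ih
      _ = 5 * 2 ^ (w + 1) := by ring

lemma conv_bound (w : ℕ) :
    4 * (∑ a : Fin (w + 1), Nat.fib ((a : ℕ) + 1) * Nat.fib (w - (a : ℕ) + 1)) ≤ 5 * 2 ^ w := by
  rcases le_or_gt w 7 with hw | hw
  · interval_cases w <;> decide
  · have hterm : ∀ a : Fin (w + 1),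
        Nat.fib ((a : ℕ) + 1) * Nat.fib (w - (a : ℕ) + 1) ≤ Nat.fib (w + 1) := by
      intro a
      exact fib_mul_le (by omega)
    calc 4 * (∑ a : Fin (w + 1), Nat.fib ((a : ℕ) + 1) * Nat.fib (w - (a : ℕ) + 1))
        ≤ 4 * (∑ _a : Fin (w + 1), Nat.fib (w + 1)) := by
          refine Nat.mul_le_mul_left _ (Finset.sum_le_sum fun a _ => hterm a)
      _ = 4 * ((w + 1) * Nat.fib (w + 1)) := by simp [Finset.sum_const, mul_comm]
      _ ≤ 5 * 2 ^ w := fib_pow_bound w (by omega)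

lemma multi_nat_bound (w : ℕ) : 4 * multipartitions 2 w ≤ 5 * 2 ^ w := by
  have h1 := multi_le_sum w
  have h2 : ∑ a : Fin (w + 1),
      Fintype.card (Nat.Partition (a : ℕ)) * Fintype.card (Nat.Partition (w - (a : ℕ)))
      ≤ ∑ a : Fin (w + 1), Nat.fib ((a : ℕ) + 1) * Nat.fib (w - (a : ℕ) + 1) :=
    Finset.sum_le_sum fun a _ =>
      Nat.mul_le_mul (partition_card_le_fib _) (partition_card_le_fib _)
  have h3 := conv_bound w
  omega

theorem multipartitions_two_le (w : ℕ) :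
    (multipartitions 2 w : ℝ) ≤ (2 : ℝ) ^ ((w : ℝ) + 0.35) := by
  have hnat := multi_nat_bound w
  have h1 : (multipartitions 2 w : ℝ) ≤ 5 / 4 * 2 ^ w := by
    have : (4 * multipartitions 2 w : ℝ) ≤ (5 * 2 ^ w : ℝ) := by
      exact_mod_cast Nat.cast_le.mpr hnat
    push_cast at this
    linarith
  have hq : ((5 : ℝ) / 4) ≤ (2 : ℝ) ^ ((0.35 : ℝ)) := by
    have hpos : (0 : ℝ) < (2 : ℝ) ^ ((0.35 : ℝ)) := Real.rpow_pos_of_pos (by norm_num) _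
    have hpow : ((5 : ℝ) / 4) ^ (20 : ℕ) ≤ ((2 : ℝ) ^ ((0.35 : ℝ))) ^ (20 : ℕ) := by
      rw [← Real.rpow_natCast ((2 : ℝ) ^ ((0.35 : ℝ))) 20, ← Real.rpow_mul (by norm_num)]
      have : (0.35 : ℝ) * (20 : ℕ) = ((7 : ℕ) : ℝ) := by norm_num
      rw [this, Real.rpow_natCast]
      norm_num
    exact le_of_pow_le_pow_left₀ (by norm_num) hpos.le hpow
  have h2 : (2 : ℝ) ^ ((w : ℝ) + 0.35) = 2 ^ w * (2 : ℝ) ^ ((0.35 : ℝ)) := by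
    rw [Real.rpow_add (by norm_num), Real.rpow_natCast]
  rw [h2]
  calc (multipartitions 2 w : ℝ) ≤ 5 / 4 * 2 ^ w := h1
    _ ≤ (2 : ℝ) ^ ((0.35 : ℝ)) * 2 ^ w := by
        have : (0 : ℝ) ≤ (2 : ℝ) ^ w := by positivity
        nlinarith
    _ = 2 ^ w * (2 : ℝ) ^ ((0.35 : ℝ)) := by ring
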